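/- Let α ∈ (0,1) and θ > −α, and let (U_k)_{k≥1} be a sequence of independent random variables on a probability space such that U_k has the Beta(1−α, θ+kα) distribution. Then with probability one, Σ_{n=1}^∞ U_n ∏_{k=1}^{n−1} (1−U_k) = 1. -/

import Mathlib

open MeasureTheory ProbabilityTheory Filter Set

/-- The Beta distribution on `ℝ` with parameters `a, b`: the measure with density
`x^(a-1) * (1-x)^(b-1) / (Γ(a)Γ(b)/Γ(a+b))` on `(0,1)` with respect to Lebesgue measure. -/
noncomputable def betaMeasure' (a b : ℝ) : Measure ℝ :=
  volume.withDensity fun x =>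
    ENNReal.ofReal (Set.indicator (Set.Ioo (0:ℝ) 1)
      (fun x => x ^ (a - 1) * (1 - x) ^ (b - 1) /
        (Real.Gamma a * Real.Gamma b / Real.Gamma (a + b))) x)

lemma realBetaIntegral {a b : ℝ} (ha : 0 < a) (hb : 0 < b) :
    ∫ x in (0:ℝ)..1, x ^ (a - 1) * (1 - x) ^ (b - 1) =
      Real.Gamma a * Real.Gamma b / Real.Gamma (a + b) := by
  have hI : Complex.betaIntegral a b
      = ((∫ x in (0:ℝ)..1, x ^ (a - 1) * (1 - x) ^ (b - 1) : ℝ) : ℂ) := by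
    rw [Complex.betaIntegral, ← intervalIntegral.integral_ofReal]
    apply intervalIntegral.integral_congr
    intro x hx
    rw [Set.uIcc_of_le (by norm_num : (0:ℝ) ≤ 1)] at hx
    show (x:ℂ) ^ ((a:ℂ)-1) * (1-(x:ℂ)) ^ ((b:ℂ)-1) = ((x ^ (a - 1) * (1 - x) ^ (b - 1) : ℝ) : ℂ)
    rw [show ((a:ℂ) - 1) = ((a - 1 : ℝ) : ℂ) by push_cast; ring,
      show ((b:ℂ) - 1) = ((b - 1 : ℝ) : ℂ) by push_cast; ring,
      show (1 - (x:ℂ)) = ((1 - x : ℝ) : ℂ) by push_cast; ring,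
      ← Complex.ofReal_cpow hx.1, ← Complex.ofReal_cpow (by linarith [hx.2] : (0:ℝ) ≤ 1 - x)]
    push_cast
    ring
  have h := Complex.Gamma_mul_Gamma_eq_betaIntegral (s := (a:ℂ)) (t := (b:ℂ))
    (by simpa using ha) (by simpa using hb)
  rw [hI] at h
  have hab : (0:ℝ) < Real.Gamma (a + b) := Real.Gamma_pos_of_pos (by linarith)
  have h' : Real.Gamma a * Real.Gamma b
      = Real.Gamma (a + b) * ∫ x in (0:ℝ)..1, x ^ (a - 1) * (1 - x) ^ (b - 1) := by
    have := h
    rw [← Complex.ofReal_add, Complex.Gamma_ofReal, Complex.Gamma_ofReal, Complex.Gamma_ofReal] at this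
    exact_mod_cast this
  rw [h']
  field_simp

lemma betaIntegrandIntegrable {a b : ℝ} (ha : 0 < a) (hb : 0 < b) :
    IntegrableOn (fun x : ℝ => x ^ (a - 1) * (1 - x) ^ (b - 1)) (Set.Ioo 0 1) := by
  have hc : IntervalIntegrable (fun x : ℝ => (x:ℂ) ^ ((a:ℂ) - 1) * (1 - (x:ℂ)) ^ ((b:ℂ) - 1))
      volume 0 1 := Complex.betaIntegral_convergent (by simpa using ha) (by simpa using hb)
  rw [intervalIntegrable_iff_integrableOn_Ioo_of_le (by norm_num)] at hc
  have heq : ∀ x ∈ Set.Ioo (0:ℝ) 1,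
      Complex.re ((x:ℂ) ^ ((a:ℂ) - 1) * (1 - (x:ℂ)) ^ ((b:ℂ) - 1))
        = x ^ (a - 1) * (1 - x) ^ (b - 1) := by
    intro x hx
    rw [show ((a:ℂ) - 1) = ((a - 1 : ℝ) : ℂ) by push_cast; ring,
      show ((b:ℂ) - 1) = ((b - 1 : ℝ) : ℂ) by push_cast; ring,
      show (1 - (x:ℂ)) = ((1 - x : ℝ) : ℂ) by push_cast; ring,
      ← Complex.ofReal_cpow hx.1.le, ← Complex.ofReal_cpow (by linarith [hx.2] : (0:ℝ) ≤ 1 - x)]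
    rw [← Complex.ofReal_mul, Complex.ofReal_re]
  exact (Integrable.re hc).congr ((ae_restrict_iff' measurableSet_Ioo).2
    (Filter.Eventually.of_forall fun x hx => heq x hx))

lemma realBetaIntegral'' {a b : ℝ} (ha : 0 < a) (hb : 0 < b) :
    ∫⁻ x in Set.Ioo (0:ℝ) 1, ENNReal.ofReal (x ^ (a - 1) * (1 - x) ^ (b - 1)) =
      ENNReal.ofReal (Real.Gamma a * Real.Gamma b / Real.Gamma (a + b)) := by
  rw [← MeasureTheory.ofReal_integral_eq_lintegral_ofReal (betaIntegrandIntegrable ha hb)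
    ((ae_restrict_iff' measurableSet_Ioo).2 (Filter.Eventually.of_forall fun x hx =>
      mul_nonneg (Real.rpow_nonneg hx.1.le _) (Real.rpow_nonneg (by linarith [hx.2]) _)))]
  congr 1
  rw [← realBetaIntegral ha hb, intervalIntegral.integral_of_le (by norm_num : (0:ℝ) ≤ 1),
    MeasureTheory.integral_Ioc_eq_integral_Ioo]

lemma betaMeasure_lintegral_one_sub {a b : ℝ} (ha : 0 < a) (hb : 0 < b) :
    ∫⁻ x, ENNReal.ofReal (1 - x) ∂ betaMeasure' a b = ENNReal.ofReal (b / (a + b)) := by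
  set C : ℝ := Real.Gamma a * Real.Gamma b / Real.Gamma (a + b) with hCdef
  have hC : 0 < C := div_pos (mul_pos (Real.Gamma_pos_of_pos ha) (Real.Gamma_pos_of_pos hb))
    (Real.Gamma_pos_of_pos (by linarith))
  have hmono : Measurable fun x : ℝ => x ^ (a - 1) * (1 - x) ^ (b - 1) / C :=
    ((measurable_id.pow_const (a-1)).mul ((measurable_const.sub measurable_id).pow_const (b-1))).div_const C
  have hf : Measurable fun x : ℝ => ENNReal.ofReal
      ((Set.Ioo (0:ℝ) 1).indicator (fun x => x ^ (a - 1) * (1 - x) ^ (b - 1) / C) x) :=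
    ENNReal.measurable_ofReal.comp (hmono.indicator measurableSet_Ioo)
  have hφ : Measurable fun x : ℝ => ENNReal.ofReal (1 - x) :=
    ENNReal.measurable_ofReal.comp (measurable_const.sub measurable_id)
  rw [betaMeasure', lintegral_withDensity_eq_lintegral_mul _ hf hφ]
  have hb1 : (0:ℝ) < b + 1 := by linarith
  have h1 : ∀ x : ℝ, ((fun x => ENNReal.ofReal
        ((Set.Ioo (0:ℝ) 1).indicator (fun x => x ^ (a - 1) * (1 - x) ^ (b - 1) / C) x))
        * fun x => ENNReal.ofReal (1 - x)) x
      = (Set.Ioo (0:ℝ) 1).indicator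
        (fun x => ENNReal.ofReal (x ^ (a - 1) * (1 - x) ^ ((b + 1) - 1)) * ENNReal.ofReal C⁻¹) x := by
    intro x
    by_cases hx : x ∈ Set.Ioo (0:ℝ) 1
    · simp only [Pi.mul_apply, Set.indicator_of_mem hx]
      have hx1 : (0:ℝ) < x := hx.1
      have hx2 : (0:ℝ) < 1 - x := by linarith [hx.2]
      have hnn : 0 ≤ x ^ (a - 1) * (1 - x) ^ (b - 1) / C :=
        div_nonneg (mul_nonneg (Real.rpow_nonneg hx1.le _) (Real.rpow_nonneg hx2.le _)) hC.le
      rw [← ENNReal.ofReal_mul hnn]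
      have : x ^ (a - 1) * (1 - x) ^ (b - 1) / C * (1 - x)
          = x ^ (a - 1) * (1 - x) ^ ((b + 1) - 1) * C⁻¹ := by
        rw [show (b + 1) - 1 = (b - 1) + 1 by ring, Real.rpow_add_one hx2.ne']
        ring
      rw [this, ENNReal.ofReal_mul (mul_nonneg (Real.rpow_nonneg hx1.le _) (Real.rpow_nonneg hx2.le _))]
    · simp only [Pi.mul_apply, Set.indicator_of_notMem hx]
      simp
  rw [lintegral_congr h1, lintegral_indicator measurableSet_Ioo _,
    lintegral_mul_const' _ _ ENNReal.ofReal_ne_top, realBetaIntegral'' ha hb1,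
    ← ENNReal.ofReal_mul (by positivity)]
  congr 1
  have gb : Real.Gamma (b + 1) = b * Real.Gamma b := Real.Gamma_add_one hb.ne'
  have gab : Real.Gamma (a + (b + 1)) = (a + b) * Real.Gamma (a + b) := by
    rw [show a + (b + 1) = (a + b) + 1 by ring, Real.Gamma_add_one (by positivity)]
  rw [gb, gab, hCdef]
  have h2 : Real.Gamma a ≠ 0 := (Real.Gamma_pos_of_pos ha).ne'
  have h3 : Real.Gamma b ≠ 0 := (Real.Gamma_pos_of_pos hb).ne'
  have h4 : Real.Gamma (a + b) ≠ 0 := (Real.Gamma_pos_of_pos (by linarith)).ne'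
  have h5 : a + b ≠ 0 := by positivity
  field_simp

lemma betaMeasure_compl {a b : ℝ} :
    betaMeasure' a b (Set.Ioo (0:ℝ) 1)ᶜ = 0 := by
  rw [betaMeasure', withDensity_apply _ measurableSet_Ioo.compl]
  rw [setLIntegral_congr_fun (g := fun _ => 0) measurableSet_Ioo.compl
    (fun x hx => by
      simp [Set.indicator_of_notMem (Set.notMem_of_mem_compl hx)])]
  simp

lemma gem_prod_tendsto_zero (α θ : ℝ) (hα : α ∈ Set.Ioo (0:ℝ) 1) (hθ : -α < θ) :
    Filter.Tendsto (fun N => ∏ k ∈ Finset.range N,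
      (θ + ((k : ℝ) + 1) * α) / (1 - α + (θ + ((k : ℝ) + 1) * α))) atTop (nhds 0) := by
  obtain ⟨hα0, hα1⟩ := hα
  set c : ℕ → ℝ := fun k => (θ + ((k : ℝ) + 1) * α) / (1 - α + (θ + ((k : ℝ) + 1) * α)) with hc
  set d : ℕ → ℝ := fun k => (1 - α) / (θ + 1 + (k : ℝ) * α) with hd
  have hden : ∀ k : ℕ, (0:ℝ) < θ + 1 + (k : ℝ) * α := by
    intro k
    have : (0:ℝ) ≤ (k : ℝ) * α := mul_nonneg (Nat.cast_nonneg k) hα0.le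
    nlinarith
  have hnum : ∀ k : ℕ, (0:ℝ) < θ + ((k : ℝ) + 1) * α := by
    intro k
    have : (0:ℝ) ≤ (k : ℝ) * α := mul_nonneg (Nat.cast_nonneg k) hα0.le
    nlinarith
  have hcd : ∀ k : ℕ, c k = 1 - d k := by
    intro k
    show (θ + ((k : ℝ) + 1) * α) / (1 - α + (θ + ((k : ℝ) + 1) * α))
      = 1 - (1 - α) / (θ + 1 + (k : ℝ) * α)
    rw [show 1 - α + (θ + ((k : ℝ) + 1) * α) = θ + 1 + (k : ℝ) * α by ring,
      eq_sub_iff_add_eq, ← add_div,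
      show θ + ((k : ℝ) + 1) * α + (1 - α) = θ + 1 + (k : ℝ) * α by ring,
      div_self (hden k).ne']
  have hc_nonneg : ∀ k : ℕ, 0 ≤ c k := fun k =>
    div_nonneg (hnum k).le (by have := hden k; nlinarith)
  have hck : ∀ k : ℕ, c k ≤ Real.exp (-(d k)) := by
    intro k
    rw [hcd k]
    linarith [Real.add_one_le_exp (-(d k))]
  have hbound : ∀ N, ∏ k ∈ Finset.range N, c k
      ≤ Real.exp (∑ k ∈ Finset.range N, -(d k)) := by
    intro N
    rw [Real.exp_sum]
    exact Finset.prod_le_prod (fun k _ => hc_nonneg k) (fun k _ => hck k)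
  have hsum : Filter.Tendsto (fun N => ∑ k ∈ Finset.range N, d k) atTop atTop := by
    set c0 : ℝ := (1 - α) / (θ + 1 + α) with hc0
    have hc0pos : 0 < c0 := div_pos (by linarith) (by nlinarith)
    have hH : Filter.Tendsto
        (fun N => c0 * ∑ k ∈ Finset.range N, 1 / ((k : ℝ) + 1)) atTop atTop :=
      Real.tendsto_sum_range_one_div_nat_succ_atTop.const_mul_atTop hc0pos
    apply Filter.tendsto_atTop_mono _ hH
    intro N
    rw [Finset.mul_sum]
    apply Finset.sum_le_sum
    intro k _
    have hk1 : (0:ℝ) < (k : ℝ) + 1 := by positivity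
    have hle : θ + 1 + (k : ℝ) * α ≤ (θ + 1 + α) * ((k : ℝ) + 1) := by nlinarith
    rw [hc0, div_mul_div_comm, mul_one]
    exact div_le_div_of_nonneg_left (by linarith) (hden k) hle
  have hexp : Filter.Tendsto (fun N => Real.exp (∑ k ∈ Finset.range N, -(d k)))
      atTop (nhds 0) := by
    apply Real.tendsto_exp_atBot.comp
    simp only [Finset.sum_neg_distrib]
    exact Filter.tendsto_neg_atBot_iff.mpr hsum
  exact squeeze_zero (fun N => Finset.prod_nonneg fun k _ => hc_nonneg k) hbound hexp

/-- For `α ∈ (0,1)`, `θ > -α` and `(U_k)_{k ≥ 1}` independent with `U_k ~ Beta(1-α, θ+kα)`,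
with probability one `∑_{n≥1} U_n ∏_{k=1}^{n-1} (1 - U_k) = 1`.  (Here `U k` stands for
`U_{k+1}`, `k : ℕ`.) -/
theorem gem_sum_eq_one {Ω : Type*} [MeasurableSpace Ω] (P : Measure Ω) [IsProbabilityMeasure P]
    (α θ : ℝ) (hα : α ∈ Set.Ioo (0:ℝ) 1) (hθ : -α < θ)
    (U : ℕ → Ω → ℝ) (hmeas : ∀ k, Measurable (U k))
    (hindep : iIndepFun U P)
    (hlaw : ∀ k : ℕ, P.map (U k) = betaMeasure' (1 - α) (θ + (k + 1) * α)) :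
    ∀ᵐ ω ∂P, (∑' n : ℕ, U n ω * ∏ k ∈ Finset.range n, (1 - U k ω)) = 1 := by
  obtain ⟨hα0, hα1⟩ := hα
  have ha : (0:ℝ) < 1 - α := by linarith
  have hbk : ∀ k : ℕ, (0:ℝ) < θ + ((k : ℝ) + 1) * α := by
    intro k
    have : (0:ℝ) ≤ (k : ℝ) * α := mul_nonneg (Nat.cast_nonneg k) hα0.le
    nlinarith
  -- almost surely U k ∈ (0,1)
  have hsupp : ∀ᵐ ω ∂P, ∀ k, U k ω ∈ Set.Ioo (0:ℝ) 1 := by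
    rw [ae_all_iff]
    intro k
    have h0 : P.map (U k) (Set.Ioo (0:ℝ) 1)ᶜ = 0 := by
      rw [hlaw k]; exact betaMeasure_compl
    rw [Measure.map_apply (hmeas k) measurableSet_Ioo.compl] at h0
    rw [ae_iff]
    convert h0 using 2
    ext; simp
  -- the ENNReal-valued factors
  set V : ℕ → Ω → ENNReal := fun k ω => ENNReal.ofReal (1 - U k ω) with hV
  have hφ : Measurable fun x : ℝ => ENNReal.ofReal (1 - x) :=
    ENNReal.measurable_ofReal.comp (measurable_const.sub measurable_id)
  have hVmeas : ∀ k, Measurable (V k) := fun k => hφ.comp (hmeas k)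
  have hVindep : iIndepFun V P :=
    hindep.comp (fun _ => fun x => ENNReal.ofReal (1 - x)) (fun _ => hφ)
  -- expectation of each factor
  have hmom : ∀ k : ℕ, ∫⁻ ω, V k ω ∂P
      = ENNReal.ofReal ((θ + ((k : ℝ) + 1) * α) / (1 - α + (θ + ((k : ℝ) + 1) * α))) := by
    intro k
    have := lintegral_map (μ := P) hφ (hmeas k)
    rw [hlaw k] at this
    rw [hV]
    simp only []
    rw [← this, betaMeasure_lintegral_one_sub ha (hbk k)]
  -- expectation of partial products
  have hprod : ∀ N : ℕ, ∫⁻ ω, ∏ k ∈ Finset.range N, V k ω ∂P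
      = ∏ k ∈ Finset.range N, ∫⁻ ω, V k ω ∂P := by
    intro N
    induction N with
    | zero => simp
    | succ n ih =>
        rw [Finset.prod_range_succ, ← ih]
        have hind : IndepFun (∏ j ∈ Finset.range n, V j) (V n) P :=
          hVindep.indepFun_prod_range_succ hVmeas n
        have hpm : Measurable (∏ j ∈ Finset.range n, V j) := by
          rw [show (∏ j ∈ Finset.range n, V j) = fun ω => ∏ j ∈ Finset.range n, V j ω
            from funext fun ω => Finset.prod_apply ω _ _]
          exact Finset.measurable_prod _ (fun i _ => hVmeas i)
        have := lintegral_mul_eq_lintegral_mul_lintegral_of_indepFun hpm (hVmeas n) hind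
        calc ∫⁻ ω, ∏ k ∈ Finset.range (n+1), V k ω ∂P
            = ∫⁻ ω, ((∏ j ∈ Finset.range n, V j) * V n) ω ∂P := by
              apply lintegral_congr
              intro ω
              simp [Finset.prod_range_succ]
          _ = (∫⁻ ω, (∏ j ∈ Finset.range n, V j) ω ∂P) * ∫⁻ ω, V n ω ∂P := this
          _ = (∫⁻ ω, ∏ k ∈ Finset.range n, V k ω ∂P) * ∫⁻ ω, V n ω ∂P := by
              congr 1
              apply lintegral_congr
              intro ω
              simp
  have hE : ∀ N : ℕ, ∫⁻ ω, ∏ k ∈ Finset.range N, V k ω ∂P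
      = ENNReal.ofReal (∏ k ∈ Finset.range N,
          (θ + ((k : ℝ) + 1) * α) / (1 - α + (θ + ((k : ℝ) + 1) * α))) := by
    intro N
    rw [hprod N, ENNReal.ofReal_prod_of_nonneg (fun k _ =>
      div_nonneg (hbk k).le (by have := hbk k; nlinarith))]
    exact Finset.prod_congr rfl fun k _ => hmom k
  -- the liminf has zero integral
  have htend0 : Filter.Tendsto
      (fun N => ∫⁻ ω, ∏ k ∈ Finset.range N, V k ω ∂P) atTop (nhds 0) := by
    simp only [hE]
    have := gem_prod_tendsto_zero α θ ⟨hα0, hα1⟩ hθ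
    have h0 : (0 : ENNReal) = ENNReal.ofReal 0 := by simp
    rw [h0]
    exact (ENNReal.continuous_ofReal.tendsto 0).comp this
  have hliminf0 : ∫⁻ ω, Filter.liminf (fun N => ∏ k ∈ Finset.range N, V k ω) atTop ∂P = 0 := by
    apply le_antisymm _ zero_le
    calc ∫⁻ ω, Filter.liminf (fun N => ∏ k ∈ Finset.range N, V k ω) atTop ∂P
        ≤ Filter.liminf (fun N => ∫⁻ ω, ∏ k ∈ Finset.range N, V k ω ∂P) atTop :=
          lintegral_liminf_le (fun N => Finset.measurable_prod _ (fun i _ => hVmeas i))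
      _ = 0 := htend0.liminf_eq
  have hae0 : ∀ᵐ ω ∂P, Filter.liminf (fun N => ∏ k ∈ Finset.range N, V k ω) atTop = 0 := by
    have hm : Measurable fun ω => Filter.liminf (fun N => ∏ k ∈ Finset.range N, V k ω) atTop :=
      Measurable.liminf (fun N => Finset.measurable_prod _ (fun i _ => hVmeas i))
    exact (lintegral_eq_zero_iff hm).1 hliminf0
  -- conclude pointwise
  filter_upwards [hsupp, hae0] with ω hω hl
  set r : ℕ → ℝ := fun N => ∏ k ∈ Finset.range N, (1 - U k ω) with hr
  have hrofReal : ∀ N, ENNReal.ofReal (r N) = ∏ k ∈ Finset.range N, V k ω := by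
    intro N
    rw [hr]
    exact ENNReal.ofReal_prod_of_nonneg (fun k _ => by linarith [(hω k).2])
  have hanti : Antitone fun N => ∏ k ∈ Finset.range N, V k ω := by
    apply antitone_nat_of_succ_le
    intro n
    rw [Finset.prod_range_succ]
    calc (∏ k ∈ Finset.range n, V k ω) * V n ω
        ≤ (∏ k ∈ Finset.range n, V k ω) * 1 := by
          apply mul_le_mul_right
          rw [hV]
          simp only []
          calc ENNReal.ofReal (1 - U n ω) ≤ ENNReal.ofReal 1 :=
                ENNReal.ofReal_le_ofReal (by linarith [(hω n).1])
            _ = 1 := by simp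
      _ = ∏ k ∈ Finset.range n, V k ω := by rw [mul_one]
  have htendV : Filter.Tendsto (fun N => ∏ k ∈ Finset.range N, V k ω) atTop (nhds 0) := by
    have h1 := tendsto_atTop_iInf hanti
    have h2 : (⨅ N, ∏ k ∈ Finset.range N, V k ω) = 0 := by
      rw [← h1.liminf_eq]; exact hl
    rwa [h2] at h1
  have hrnn : ∀ N, 0 ≤ r N := fun N =>
    Finset.prod_nonneg fun k _ => by linarith [(hω k).2]
  have htendr : Filter.Tendsto r atTop (nhds 0) := by
    have h3 : Filter.Tendsto (fun N => (∏ k ∈ Finset.range N, V k ω).toReal)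
        atTop (nhds ((0 : ENNReal)).toReal) :=
      (ENNReal.tendsto_toReal (by simp)).comp htendV
    simp only [ENNReal.toReal_zero] at h3
    apply h3.congr
    intro N
    rw [← hrofReal N, ENNReal.toReal_ofReal (hrnn N)]
  -- partial sums telescope
  have hps : ∀ N, ∑ n ∈ Finset.range N, U n ω * r n = 1 - r N := by
    intro N
    induction N with
    | zero => simp [hr]
    | succ n ih =>
        rw [Finset.sum_range_succ, ih, hr]
        simp only [Finset.prod_range_succ]
        ring
  have hfnn : ∀ n, 0 ≤ U n ω * r n := fun n =>
    mul_nonneg (hω n).1.le (hrnn n)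
  have hsummable : Summable fun n => U n ω * r n := by
    apply summable_of_sum_range_le (c := 1) hfnn
    intro n
    rw [hps n]
    linarith [hrnn n]
  have h4 : Filter.Tendsto (fun N => ∑ n ∈ Finset.range N, U n ω * r n) atTop
      (nhds (∑' n, U n ω * r n)) := hsummable.hasSum.tendsto_sum_nat
  have h5 : Filter.Tendsto (fun N => ∑ n ∈ Finset.range N, U n ω * r n) atTop (nhds 1) := by
    have : Filter.Tendsto (fun N => 1 - r N) atTop (nhds (1 - 0)) :=
      (tendsto_const_nhds).sub htendr
    simp only [sub_zero] at this
    apply this.congr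
    intro N
    rw [hps N]
  have := tendsto_nhds_unique h4 h5
  simpa [hr] using this
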